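/- Let X = (Xⁱ, ∂ⁱ) be a cochain complex in A = Fun(C, G) that is dg-cotorsion, i.e. every short exact sequence of complexes 0 → X → E → F → 0 with F a flat complex splits. Then for every i ∈ ℤ, the component Xⁱ is a cotorsion functor. -/

import Mathlib

set_option linter.unusedSectionVars false

open CategoryTheory CategoryTheory.Limits CategoryTheory.MonoidalCategory
  CategoryTheory.MonoidalClosed

universe v u

namespace FlatFunctorsPaper

variable {G : Type u} [Category.{v} G] [Abelian G] [MonoidalCategory G]
  [SymmetricCategory G] [MonoidalClosed G] [MonoidalPreadditive G]

/-- `X⁺ = [X, J]`, the internal hom into `J`. -/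
noncomputable def pObj (J X : G) : G := (ihom X).obj J

/-- The contravariant functorial action of `(-)⁺ = [-, J]`. -/
noncomputable def pMap (J : G) {X Y : G} (f : X ⟶ Y) : pObj J Y ⟶ pObj J X :=
  (MonoidalClosed.pre f).app J

@[simp] lemma pMap_id (J X : G) : pMap J (𝟙 X) = 𝟙 (pObj J X) := by
  simp [pMap, pObj]

@[simp] lemma pMap_comp (J : G) {X Y Z : G} (f : X ⟶ Y) (g : Y ⟶ Z) :
    pMap J (f ≫ g) = pMap J g ≫ pMap J f := by
  simp [pMap]; rfl

@[simp] lemma pMap_zero (J : G) (X Y : G) : pMap J (0 : X ⟶ Y) = 0 := by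
  apply MonoidalClosed.uncurry_injective
  unfold pObj
  rw [pMap, MonoidalClosed.uncurry_pre, MonoidalClosed.uncurry_eq]
  simp

/-- The canonical biduality morphism `X ⟶ X⁺⁺` in `G`. -/
noncomputable def bid (J X : G) : X ⟶ pObj J (pObj J X) :=
  MonoidalClosed.curry ((β_ (pObj J X) X).hom ≫ (ihom.ev X).app J)

lemma bid_natural (J : G) {X Y : G} (f : X ⟶ Y) :
    f ≫ bid J Y = bid J X ≫ pMap J (pMap J f) := by
  apply MonoidalClosed.uncurry_injective
  unfold bid pMap pObj
  rw [MonoidalClosed.uncurry_natural_left, MonoidalClosed.uncurry_natural_left]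
  rw [MonoidalClosed.uncurry_curry, MonoidalClosed.uncurry_pre]
  rw [whisker_exchange_assoc]
  rw [← MonoidalClosed.uncurry_eq, MonoidalClosed.uncurry_curry]
  simp

section Dual

variable {D : Type v} [SmallCategory D]

/-- The objectwise dual `F⁺` of a functor `F : D ⥤ G`, a functor `Dᵒᵖ ⥤ G`. -/
@[simps] noncomputable def dObj (J : G) (F : D ⥤ G) : Dᵒᵖ ⥤ G where
  obj c := pObj J (F.obj c.unop)
  map f := pMap J (F.map f.unop)
  map_id c := by simp
  map_comp f g := by simp

/-- The dual of a natural transformation. -/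
@[simps] noncomputable def dMap (J : G) {F F' : D ⥤ G} (η : F ⟶ F') :
    dObj J F' ⟶ dObj J F where
  app c := pMap J (η.app c.unop)
  naturality _ _ f := by
    show pMap J (F'.map f.unop) ≫ _ = _ ≫ pMap J (F.map f.unop)
    rw [← pMap_comp, ← pMap_comp, NatTrans.naturality]

@[simp] lemma dMap_id (J : G) (F : D ⥤ G) : dMap J (𝟙 F) = 𝟙 (dObj J F) := by
  ext c; simp; rfl

@[simp] lemma dMap_comp (J : G) {F F' F'' : D ⥤ G} (α : F ⟶ F') (β : F' ⟶ F'') :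
    dMap J (α ≫ β) = dMap J β ≫ dMap J α := by
  ext c; simp; rfl

@[simp] lemma dMap_zero (J : G) (F F' : D ⥤ G) : dMap J (0 : F ⟶ F') = 0 := by
  ext c; simp; rfl

/-- The double dual `F⁺⁺` of a functor `F : D ⥤ G`. -/
noncomputable def ddObj (J : G) (F : D ⥤ G) : D ⥤ G := opOp D ⋙ dObj J (dObj J F)

/-- The canonical natural transformation `φ_F : F ⟶ F⁺⁺`. -/
noncomputable def phi (J : G) (F : D ⥤ G) : F ⟶ ddObj J F where
  app c := bid J (F.obj c)
  naturality _ _ f := bid_natural J (F.map f)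

/-- The dual of a short exact sequence (short complex) of functors. -/
noncomputable def dSC (J : G) (S : ShortComplex (D ⥤ G)) : ShortComplex (Dᵒᵖ ⥤ G) :=
  ShortComplex.mk (dMap J S.g) (dMap J S.f) (by rw [← dMap_comp, S.zero, dMap_zero])

/-- A short exact sequence of functors is *pure* if its dual splits. -/
def IsPure (J : G) (S : ShortComplex (D ⥤ G)) : Prop := Nonempty ((dSC J S).Splitting)

/-- A functor `F` is *flat* if every short exact sequence ending in `F` is pure. -/
def IsFlat (J : G) (F : D ⥤ G) : Prop :=
  ∀ ⦃K E : D ⥤ G⦄ (i : K ⟶ E) (p : E ⟶ F) (w : i ≫ p = 0),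
    (ShortComplex.mk i p w).ShortExact → IsPure J (ShortComplex.mk i p w)

/-- A functor `X` is *cotorsion* if every short exact sequence `0 → X → E → F → 0`
with `F` flat splits. -/
def IsCotorsion (J : G) (X : D ⥤ G) : Prop :=
  ∀ ⦃E F : D ⥤ G⦄ (i : X ⟶ E) (p : E ⟶ F) (w : i ≫ p = 0),
    (ShortComplex.mk i p w).ShortExact → IsFlat J F →
      Nonempty (ShortComplex.mk i p w).Splitting

/-- A functor `P` is *pure injective* if every morphism into `P` extends along
pure monomorphisms. -/
def IsPureInjective (J : G) (P : D ⥤ G) : Prop :=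
  ∀ ⦃K E L : D ⥤ G⦄ (i : K ⟶ E) (p : E ⟶ L) (w : i ≫ p = 0),
    (ShortComplex.mk i p w).ShortExact → IsPure J (ShortComplex.mk i p w) →
      ∀ f : K ⟶ P, ∃ h : E ⟶ P, i ≫ h = f

end Dual

section ObjectLevel

/-- The dual of a short exact sequence (short complex) in `G`. -/
noncomputable def dSCG (J : G) (S : ShortComplex G) : ShortComplex G :=
  ShortComplex.mk (pMap J S.g) (pMap J S.f) (by rw [← pMap_comp, S.zero, pMap_zero])

/-- A short exact sequence in `G` is *pure* if its dual splits. -/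
def IsPureG (J : G) (S : ShortComplex G) : Prop := Nonempty ((dSCG J S).Splitting)

/-- An object `X` of `G` is *flat* if every short exact sequence ending in `X` is pure. -/
def IsFlatG (J X : G) : Prop :=
  ∀ ⦃K E : G⦄ (i : K ⟶ E) (p : E ⟶ X) (w : i ≫ p = 0),
    (ShortComplex.mk i p w).ShortExact → IsPureG J (ShortComplex.mk i p w)

/-- An object `X` of `G` is *cotorsion* if every short exact sequence
`0 → X → E → F → 0` with `F` flat splits. -/
def IsCotorsionG (J X : G) : Prop :=
  ∀ ⦃E F : G⦄ (i : X ⟶ E) (p : E ⟶ F) (w : i ≫ p = 0),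
    (ShortComplex.mk i p w).ShortExact → IsFlatG J F →
      Nonempty (ShortComplex.mk i p w).Splitting

/-- The flat objects and the cotorsion objects form a complete cotorsion theory in `G`:
every object has a special flat precover and a special cotorsion preenvelope. -/
def CompleteFlatCotorsionTheoryG (J : G) : Prop :=
  ∀ X : G,
    (∃ (Cx F : G) (i : Cx ⟶ F) (p : F ⟶ X) (w : i ≫ p = 0),
      (ShortComplex.mk i p w).ShortExact ∧ IsFlatG J F ∧ IsCotorsionG J Cx) ∧
    (∃ (Cx F : G) (i : X ⟶ Cx) (p : Cx ⟶ F) (w : i ≫ p = 0),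
      (ShortComplex.mk i p w).ShortExact ∧ IsCotorsionG J Cx ∧ IsFlatG J F)

end ObjectLevel

section Complexes

variable {D : Type v} [SmallCategory D]

/-- A *flat complex*: an acyclic complex of flat functors all of whose kernels of
differentials are flat (equivalently, a pure acyclic complex of flat functors). -/
def IsFlatComplex (J : G) (X : CochainComplex (D ⥤ G) ℤ) : Prop :=
  (∀ n, X.ExactAt n) ∧ (∀ n, IsFlat J (X.X n)) ∧
    ∀ n : ℤ, IsFlat J (kernel (X.d n (n + 1)))

/-- A *cotorsion complex*: an acyclic complex of cotorsion functors all of whose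
kernels of differentials are cotorsion. -/
def IsCotorsionComplex (J : G) (X : CochainComplex (D ⥤ G) ℤ) : Prop :=
  (∀ n, X.ExactAt n) ∧ (∀ n, IsCotorsion J (X.X n)) ∧
    ∀ n : ℤ, IsCotorsion J (kernel (X.d n (n + 1)))

/-- A complex is *dg-cotorsion* if every short exact sequence of complexes
`0 → X → E → F → 0` with `F` a flat complex splits. -/
def IsDgCotorsion (J : G) (X : CochainComplex (D ⥤ G) ℤ) : Prop :=
  ∀ ⦃E F : CochainComplex (D ⥤ G) ℤ⦄ (i : X ⟶ E) (p : E ⟶ F) (w : i ≫ p = 0),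
    (ShortComplex.mk i p w).ShortExact → IsFlatComplex J F →
      Nonempty (ShortComplex.mk i p w).Splitting

end Complexes


-- AUX SECTION
section Aux

variable {D : Type v} [SmallCategory D]

/-- Helper to build a splitting of a `ShortComplex.mk`. -/
def mkSplitting {X₁ X₂ X₃ : D ⥤ G} (f : X₁ ⟶ X₂) (g : X₂ ⟶ X₃) (w : f ≫ g = 0)
    (r : X₂ ⟶ X₁) (s : X₃ ⟶ X₂) (h1 : f ≫ r = 𝟙 X₁) (h2 : s ≫ g = 𝟙 X₃)
    (h3 : r ≫ f + g ≫ s = 𝟙 X₂) : (ShortComplex.mk f g w).Splitting where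
  r := r
  s := s
  f_r := h1
  s_g := h2
  id := h3

lemma isZero_pObj (J : G) {Z : G} (hZ : IsZero Z) : IsZero (pObj J Z) := by
  rw [IsZero.iff_id_eq_zero] at hZ ⊢
  rw [← pMap_id J Z, hZ, pMap_zero]

lemma isZero_dObj (J : G) {F : D ⥤ G} (hF : IsZero F) : IsZero (dObj J F) := by
  rw [IsZero.iff_id_eq_zero] at hF ⊢
  ext c
  have hc : IsZero (F.obj c.unop) := by
    rw [IsZero.iff_id_eq_zero]
    have := congr_arg (fun (η : F ⟶ F) => η.app c.unop) hF
    simpa using this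
  have h2 := isZero_pObj J hc
  rw [IsZero.iff_id_eq_zero] at h2
  exact h2

lemma epi_of_isZero {Z Y : D ⥤ G} (h : IsZero Z) (f : Y ⟶ Z) : Epi f :=
  ⟨fun g h' _ => (IsZero.eq_of_src (by
    rw [IsZero.iff_id_eq_zero] at h ⊢
    exact h) g h')⟩

lemma isFlat_of_isZero (J : G) {F : D ⥤ G} (hF : IsZero F) : IsFlat J F := by
  intro K E f g w hse
  have hg : g = 0 := hF.eq_of_tgt g 0
  have hepi : Epi f := hse.exact.epi_f hg
  have hmono : Mono f := hse.mono_f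
  have hiso : IsIso f := isIso_of_mono_of_epi f
  have hiso' : IsIso (dMap J f) :=
    ⟨dMap J (inv f), by rw [← dMap_comp, IsIso.inv_hom_id, dMap_id],
      by rw [← dMap_comp, IsIso.hom_inv_id, dMap_id]⟩
  refine ⟨mkSplitting (dMap J g) (dMap J f) (by rw [← dMap_comp, w, dMap_zero])
    0 (@inv _ _ _ _ _ hiso') ((isZero_dObj J hF).eq_of_src _ _)
    (@IsIso.inv_hom_id _ _ _ _ _ hiso') ?_⟩
  rw [zero_comp, zero_add, @IsIso.hom_inv_id _ _ _ _ _ hiso']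

lemma isFlat_of_iso (J : G) {F F' : D ⥤ G} (e : F' ≅ F) (h : IsFlat J F) : IsFlat J F' := by
  intro K E f g w hse
  have w' : f ≫ (g ≫ e.hom) = 0 := by rw [← Category.assoc, w, zero_comp]
  have hse' : (ShortComplex.mk f (g ≫ e.hom) w').ShortExact :=
    ShortComplex.shortExact_of_iso
      (ShortComplex.isoMk (S₁ := ShortComplex.mk f g w) (S₂ := ShortComplex.mk f (g ≫ e.hom) w')
        (Iso.refl _) (Iso.refl _) e (by simp) (by simp)) hse
  obtain ⟨sp⟩ := h f (g ≫ e.hom) w' hse'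
  have hiso : IsIso (dMap J e.hom) :=
    ⟨dMap J e.inv, by rw [← dMap_comp, Iso.inv_hom_id, dMap_id],
      by rw [← dMap_comp, Iso.hom_inv_id, dMap_id]⟩
  obtain ⟨r', s', hfr, hsg, hid⟩ :
      ∃ (r' : dObj J E ⟶ dObj J F) (s' : dObj J K ⟶ dObj J E),
        dMap J (g ≫ e.hom) ≫ r' = 𝟙 (dObj J F) ∧ s' ≫ dMap J f = 𝟙 (dObj J K) ∧
        r' ≫ dMap J (g ≫ e.hom) + dMap J f ≫ s' = 𝟙 (dObj J E) :=
    ⟨sp.r, sp.s, sp.f_r, sp.s_g, sp.id⟩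
  rw [dMap_comp] at hfr hid
  have hab : dMap J e.hom ≫ (dMap J g ≫ r') = 𝟙 _ := by
    rw [← Category.assoc]; exact hfr
  have hba : (dMap J g ≫ r') ≫ dMap J e.hom = 𝟙 _ := by
    haveI := hiso
    rw [← cancel_epi (dMap J e.hom), ← Category.assoc, hab, Category.id_comp,
      Category.comp_id]
  refine ⟨mkSplitting (dMap J g) (dMap J f) (by rw [← dMap_comp, w, dMap_zero])
    (r' ≫ dMap J e.hom) s' ?_ hsg ?_⟩
  · rw [← Category.assoc]; exact hba
  · rw [Category.assoc]
    exact hid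

end Aux





section Construction

open ZeroObject

variable {C : Type v} [SmallCategory C]

/-- objects of the disk complex -/
noncomputable def Dobj (i : ℤ) (F : C ⥤ G) (n : ℤ) : C ⥤ G :=
  if n = i ∨ n = i + 1 then F else 0

lemma Dobj_eq {i : ℤ} {F : C ⥤ G} {n : ℤ} (h : n = i ∨ n = i + 1) : Dobj (G := G) i F n = F :=
  if_pos h

lemma Dobj_eq_zero {i : ℤ} {F : C ⥤ G} {n : ℤ} (h : ¬(n = i ∨ n = i + 1)) :
    Dobj (G := G) i F n = 0 :=
  if_neg h

/-- differentials of the disk complex -/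
noncomputable def dD (i : ℤ) (F : C ⥤ G) (n : ℤ) : Dobj i F n ⟶ Dobj i F (n + 1) :=
  if h : n = i then
    eqToHom (by rw [Dobj_eq (Or.inl h), Dobj_eq (Or.inr (by rw [h]))])
  else 0

lemma dD_sq (i : ℤ) (F : C ⥤ G) (n : ℤ) : dD i F n ≫ dD i F (n + 1) = 0 := by
  by_cases h : n = i
  · have h2 : ¬(n + 1 = i) := by omega
    rw [dD, dD, dif_pos h, dif_neg h2, comp_zero]
  · rw [dD, dif_neg h, zero_comp]

/-- the disk complex: `F` in degrees `i` and `i+1` -/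
noncomputable def DC (i : ℤ) (F : C ⥤ G) : CochainComplex (C ⥤ G) ℤ :=
  CochainComplex.of (Dobj i F) (dD i F) (dD_sq i F)

variable (X : CochainComplex (C ⥤ G) ℤ) (i : ℤ) {E F : C ⥤ G} (ι : X.X i ⟶ E) (p : E ⟶ F)

/-- the pushout of `X.d i (i+1)` along `ι` -/
noncomputable abbrev Pob : C ⥤ G := pushout (X.d i (i + 1)) ι

/-- objects of the modified complex `Y` -/
noncomputable def Yobj (n : ℤ) : C ⥤ G :=
  if n = i then E else if n = i + 1 then Pob X i ι else X.X n

lemma Yobj_i : Yobj X i ι i = E := by rw [Yobj, if_pos rfl]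

lemma Yobj_i1 : Yobj X i ι (i + 1) = Pob X i ι := by
  rw [Yobj, if_neg (by omega), if_pos rfl]

lemma Yobj_ne {n : ℤ} (h1 : n ≠ i) (h2 : n ≠ i + 1) : Yobj X i ι n = X.X n := by
  rw [Yobj, if_neg h1, if_neg h2]

/-- differentials of `Y` -/
noncomputable def dY (n : ℤ) : Yobj X i ι n ⟶ Yobj X i ι (n + 1) :=
  if h : n + 1 = i then
    eqToHom (Yobj_ne X i ι (by omega) (by omega)) ≫ X.d n (n + 1) ≫
      eqToHom (congrArg X.X h) ≫ ι ≫ eqToHom (by rw [h, Yobj_i])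
  else if h2 : n = i then
    eqToHom (by rw [h2, Yobj_i]) ≫ pushout.inr (X.d i (i + 1)) ι ≫
      eqToHom (by rw [h2]; exact (Yobj_i1 X i ι).symm)
  else if h3 : n = i + 1 then
    eqToHom (by rw [h3]; exact Yobj_i1 X i ι) ≫
      pushout.desc (X.d (i + 1) (i + 1 + 1)) 0 (by simp) ≫
      eqToHom (by rw [h3, Yobj_ne X i ι (by omega) (by omega)])
  else
    eqToHom (Yobj_ne X i ι h2 h3) ≫ X.d n (n + 1) ≫
      eqToHom (Yobj_ne X i ι (by omega) (by omega)).symm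

lemma dY_sq (n : ℤ) : dY X i ι n ≫ dY X i ι (n + 1) = 0 := by
  by_cases h : n + 1 = i
  · subst h
    rw [dY, dY, dif_pos rfl, dif_neg (by omega), dif_pos rfl]
    simp only [Category.assoc, eqToHom_trans, eqToHom_trans_assoc, eqToHom_refl,
      Category.id_comp, Category.comp_id]
    slice_lhs 3 4 => rw [← pushout.condition]
    slice_lhs 2 3 => rw [HomologicalComplex.d_comp_d]
    simp
  · by_cases h2 : n = i
    · subst h2
      rw [dY, dY, dif_neg h, dif_pos rfl, dif_neg (by omega), dif_neg (by omega), dif_pos rfl]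
      simp only [Category.assoc, eqToHom_trans, eqToHom_trans_assoc, eqToHom_refl,
        Category.id_comp, Category.comp_id]
      slice_lhs 2 3 => rw [pushout.inr_desc]
      simp
    · by_cases h3 : n = i + 1
      · subst h3
        rw [dY, dY, dif_neg h, dif_neg h2, dif_pos rfl, dif_neg (by omega),
          dif_neg (by omega), dif_neg (by omega)]
        simp only [Category.assoc, eqToHom_trans, eqToHom_trans_assoc, eqToHom_refl,
          Category.id_comp, Category.comp_id]
        rw [Preadditive.IsIso.comp_left_eq_zero]
        apply pushout.hom_ext
        · slice_lhs 1 2 => rw [pushout.inl_desc]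
          slice_lhs 1 2 => rw [HomologicalComplex.d_comp_d]
          simp
        · slice_lhs 1 2 => rw [pushout.inr_desc]
          simp
      · by_cases h4 : n + 1 + 1 = i
        · rw [dY, dY, dif_neg h, dif_neg h2, dif_neg h3, dif_pos h4]
          simp only [Category.assoc, eqToHom_trans, eqToHom_trans_assoc, eqToHom_refl,
            Category.id_comp, Category.comp_id]
          slice_lhs 2 3 => rw [HomologicalComplex.d_comp_d]
          simp
        · rw [dY, dY, dif_neg h, dif_neg h2, dif_neg h3, dif_neg h4, dif_neg (by omega),
            dif_neg (by omega)]
          simp only [Category.assoc, eqToHom_trans, eqToHom_trans_assoc, eqToHom_refl,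
            Category.id_comp, Category.comp_id]
          slice_lhs 2 3 => rw [HomologicalComplex.d_comp_d]
          simp

/-- the modified complex `Y` -/
noncomputable def YC : CochainComplex (C ⥤ G) ℤ :=
  CochainComplex.of (Yobj X i ι) (dY X i ι) (dY_sq X i ι)


/-- components of the inclusion `X ⟶ Y` -/
noncomputable def ιf (n : ℤ) : X.X n ⟶ Yobj X i ι n :=
  if h : n = i then eqToHom (congrArg X.X h) ≫ ι ≫ eqToHom (by rw [h, Yobj_i])
  else if h2 : n = i + 1 then
    eqToHom (congrArg X.X h2) ≫ pushout.inl (X.d i (i + 1)) ι ≫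
      eqToHom (by rw [h2]; exact (Yobj_i1 X i ι).symm)
  else eqToHom (Yobj_ne X i ι h h2).symm

/-- the inclusion `X ⟶ Y` -/
noncomputable def ιY : X ⟶ YC X i ι where
  f n := ιf X i ι n
  comm' := by
    intro n m hnm
    simp only [ComplexShape.up_Rel] at hnm
    subst hnm
    rw [show (YC X i ι).d n (n + 1) = dY X i ι n from CochainComplex.of_d _ _ n]
    change ιf X i ι n ≫ dY X i ι n = X.d n (n + 1) ≫ ιf X i ι (n + 1)
    unfold ιf dY
    beta_reduce
    by_cases h : n + 1 = i
    · subst h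
      split_ifs <;> try omega
      all_goals simp [pushout.condition_assoc]
    · by_cases h2 : n = i
      · subst h2
        split_ifs <;> try omega
        all_goals simp [pushout.condition_assoc]
      · by_cases h3 : n = i + 1
        · subst h3
          split_ifs <;> try omega
          all_goals simp [pushout.condition_assoc]
          rw [pushout.inl_desc_assoc]
        · split_ifs <;> try omega
          all_goals simp [pushout.condition_assoc]

/-- components of the projection `Y ⟶ D` -/
noncomputable def pf (w : ι ≫ p = 0) (n : ℤ) : Yobj X i ι n ⟶ Dobj i F n :=
  if h : n = i then
    eqToHom (by rw [h, Yobj_i]) ≫ p ≫ eqToHom (Dobj_eq (Or.inl h)).symm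
  else if h2 : n = i + 1 then
    eqToHom (by rw [h2]; exact Yobj_i1 X i ι) ≫
      pushout.desc 0 p (by rw [comp_zero, w]) ≫ eqToHom (Dobj_eq (Or.inr h2)).symm
  else 0

/-- the projection `Y ⟶ D` -/
noncomputable def pY (w : ι ≫ p = 0) : YC X i ι ⟶ DC i F where
  f n := pf X i ι p w n
  comm' := by
    intro n m hnm
    simp only [ComplexShape.up_Rel] at hnm
    subst hnm
    rw [show (YC X i ι).d n (n + 1) = dY X i ι n from CochainComplex.of_d _ _ n,
      show (DC i F).d n (n + 1) = dD i F n from CochainComplex.of_d _ _ n]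
    change pf X i ι p w n ≫ dD i F n = dY X i ι n ≫ pf X i ι p w (n + 1)
    unfold pf dY dD
    beta_reduce
    by_cases h : n + 1 = i
    · subst h
      split_ifs <;> try omega
      all_goals simp [reassoc_of% w]
    · by_cases h2 : n = i
      · subst h2
        split_ifs <;> try omega
        all_goals simp [reassoc_of% w]
        rw [pushout.inr_desc_assoc]
      · by_cases h3 : n = i + 1
        · subst h3
          split_ifs <;> try omega
          all_goals simp [reassoc_of% w]
        · split_ifs <;> try omega
          all_goals simp [reassoc_of% w]

lemma wYP (w : ι ≫ p = 0) : ιY X i ι ≫ pY X i ι p w = 0 := by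
  apply HomologicalComplex.hom_ext
  intro n
  simp only [HomologicalComplex.comp_f, HomologicalComplex.zero_f]
  show ιf X i ι n ≫ pf X i ι p w n = 0
  unfold ιf pf
  by_cases h : n = i
  · subst h
    split_ifs <;> try omega
    all_goals simp [reassoc_of% w]
  · by_cases h2 : n = i + 1
    · subst h2
      split_ifs <;> try omega
      all_goals simp [reassoc_of% w]
      rw [pushout.inl_desc_assoc]
      exact zero_comp
    · split_ifs <;> try omega
      all_goals simp [reassoc_of% w]


lemma sesQ (w : ι ≫ p = 0) (hse : (ShortComplex.mk ι p w).ShortExact) :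
    (ShortComplex.mk (pushout.inl (X.d i (i + 1)) ι)
      (pushout.desc (0 : X.X (i + 1) ⟶ F) p (by rw [comp_zero, w]))
      (pushout.inl_desc (f := X.d i (i + 1)) (g := ι) (0 : X.X (i + 1) ⟶ F) p
        (by rw [comp_zero, w]))).ShortExact := by
  haveI hmι : Mono ι := hse.mono_f
  haveI hepi : Epi (pushout.desc (f := X.d i (i + 1)) (g := ι) (0 : X.X (i + 1) ⟶ F) p
      (by rw [comp_zero, w])) := by
    have h1 : Epi (pushout.inr (X.d i (i + 1)) ι ≫
        pushout.desc (0 : X.X (i + 1) ⟶ F) p (by rw [comp_zero, w])) := by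
      rw [pushout.inr_desc]; exact hse.epi_g
    haveI := h1
    exact epi_of_epi (pushout.inr (X.d i (i + 1)) ι) _
  refine ShortComplex.ShortExact.mk' ?_ ?_ ?_
  · refine ShortComplex.exact_of_g_is_cokernel _
      (CokernelCofork.IsColimit.ofπ' (hp := hepi) _ _ (fun {A} k hk => ?_))
    have hk' : pushout.inl (X.d i (i + 1)) ι ≫ k = 0 := hk
    have cond : ι ≫ (pushout.inr (X.d i (i + 1)) ι ≫ k) = 0 := by
      rw [← Category.assoc, ← pushout.condition, Category.assoc, hk', comp_zero]
    have hpl : p ≫ hse.gIsCokernel.desc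
        (CokernelCofork.ofπ (pushout.inr (X.d i (i + 1)) ι ≫ k) cond) =
        pushout.inr (X.d i (i + 1)) ι ≫ k := Cofork.IsColimit.π_desc hse.gIsCokernel
    refine ⟨hse.gIsCokernel.desc
      (CokernelCofork.ofπ (pushout.inr (X.d i (i + 1)) ι ≫ k) cond), ?_⟩
    apply pushout.hom_ext
    · dsimp only
      rw [pushout.inl_desc_assoc, zero_comp, hk']
    · dsimp only
      rw [pushout.inr_desc_assoc, hpl]
  · infer_instance
  · exact hepi

lemma sesY (w : ι ≫ p = 0) (hse : (ShortComplex.mk ι p w).ShortExact) :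
    (ShortComplex.mk (ιY X i ι) (pY X i ι p w) (wYP X i ι p w)).ShortExact := by
  apply HomologicalComplex.shortExact_of_degreewise_shortExact
  intro n
  by_cases h : n = i
  · subst h
    refine ShortComplex.shortExact_of_iso ?_ hse
    refine ShortComplex.isoMk (Iso.refl _) (eqToIso (Yobj_i X n ι).symm)
      (eqToIso (Dobj_eq (Or.inl rfl)).symm) ?_ ?_
    · show 𝟙 (X.X n) ≫ ιf X n ι n = ι ≫ eqToHom (Yobj_i X n ι).symm
      unfold ιf
      rw [dif_pos rfl]
      simp
    · show eqToHom (Yobj_i X n ι).symm ≫ pf X n ι p w n = p ≫ eqToHom (Dobj_eq (Or.inl rfl)).symm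
      unfold pf
      rw [dif_pos rfl]
      simp
  · by_cases h2 : n = i + 1
    · subst h2
      refine ShortComplex.shortExact_of_iso ?_ (sesQ X i ι p w hse)
      refine ShortComplex.isoMk (Iso.refl _) (eqToIso (Yobj_i1 X i ι).symm)
        (eqToIso (Dobj_eq (Or.inr rfl)).symm) ?_ ?_
      · show 𝟙 (X.X (i + 1)) ≫ ιf X i ι (i + 1) =
          pushout.inl (X.d i (i + 1)) ι ≫ eqToHom (Yobj_i1 X i ι).symm
        unfold ιf
        rw [dif_neg (by omega), dif_pos rfl]
        simp
      · show eqToHom (Yobj_i1 X i ι).symm ≫ pf X i ι p w (i + 1) =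
          pushout.desc (f := X.d i (i + 1)) (g := ι) (0 : X.X (i + 1) ⟶ F) p
            (by rw [comp_zero, w]) ≫ eqToHom (Dobj_eq (Or.inr rfl)).symm
        unfold pf
        rw [dif_neg (by omega), dif_pos rfl]
        simp
    · have hz : IsZero (Dobj i F n) := by
        rw [Dobj_eq_zero (not_or.mpr ⟨h, h2⟩)]
        exact isZero_zero _
      have hclean : (ShortComplex.mk (𝟙 (X.X n)) (0 : X.X n ⟶ Dobj i F n)
          (by rw [Category.id_comp])).ShortExact := by
        refine ShortComplex.ShortExact.mk' ?_ ?_ ?_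
        · exact (ShortComplex.exact_iff_epi _ rfl).2 (by infer_instance)
        · infer_instance
        · exact epi_of_isZero hz _
      refine ShortComplex.shortExact_of_iso ?_ hclean
      refine ShortComplex.isoMk (Iso.refl _) (eqToIso (Yobj_ne X i ι h h2).symm)
        (Iso.refl _) ?_ ?_
      · show 𝟙 (X.X n) ≫ ιf X i ι n = 𝟙 (X.X n) ≫ eqToHom (Yobj_ne X i ι h h2).symm
        unfold ιf
        rw [dif_neg h, dif_neg h2]
      · show eqToHom (Yobj_ne X i ι h h2).symm ≫ pf X i ι p w n =
          (0 : X.X n ⟶ Dobj i F n) ≫ 𝟙 _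
        unfold pf
        rw [dif_neg h, dif_neg h2]
        simp

lemma flatDC (J : G) (hF : IsFlat J F) : IsFlatComplex J (DC i F) := by
  refine ⟨?_, ?_, ?_⟩
  · intro m
    obtain ⟨n, rfl⟩ : ∃ n, m = n + 1 := ⟨m - 1, by omega⟩
    refine ((DC i F).exactAt_iff' n (n + 1) (n + 1 + 1)
      (by rw [CochainComplex.prev]; omega) (by rw [CochainComplex.next])).2 ?_
    have hf : (DC i F).d n (n + 1) = dD i F n := CochainComplex.of_d _ _ n
    have hg : (DC i F).d (n + 1) (n + 1 + 1) = dD i F (n + 1) := CochainComplex.of_d _ _ (n + 1)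
    by_cases h : n + 1 = i
    · subst h
      refine (ShortComplex.exact_iff_mono _ ?_).2 ?_
      · show (DC (n + 1) F).d n (n + 1) = 0
        rw [hf]
        unfold dD
        rw [dif_neg (by omega)]
        rfl
      · show Mono ((DC (n + 1) F).d (n + 1) (n + 1 + 1))
        rw [hg]
        unfold dD
        rw [dif_pos rfl]
        change Mono (eqToHom (_ : Dobj (G := G) (n + 1) F (n + 1) = Dobj (n + 1) F (n + 1 + 1)))
        infer_instance
    · by_cases h2 : n = i
      · subst h2
        refine (ShortComplex.exact_iff_epi _ ?_).2 ?_
        · show (DC n F).d (n + 1) (n + 1 + 1) = 0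
          rw [hg]
          unfold dD
          rw [dif_neg (by omega)]
          rfl
        · show Epi ((DC n F).d n (n + 1))
          rw [hf]
          unfold dD
          rw [dif_pos rfl]
          change Epi (eqToHom (_ : Dobj (G := G) n F n = Dobj n F (n + 1)))
          infer_instance
      · apply ShortComplex.exact_of_isZero_X₂
        show IsZero (Dobj i F (n + 1))
        rw [Dobj_eq_zero (not_or.mpr ⟨h, fun hh => h2 (by omega)⟩)]
        exact isZero_zero _
  · intro n
    show IsFlat J (Dobj i F n)
    by_cases h : n = i ∨ n = i + 1
    · exact isFlat_of_iso J (eqToIso (Dobj_eq h)) hF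
    · exact isFlat_of_isZero J (by rw [Dobj_eq_zero h]; exact isZero_zero _)
  · intro n
    have hd : (DC i F).d n (n + 1) = dD i F n := CochainComplex.of_d _ _ n
    by_cases h : n = i
    · subst h
      have he : dD n F n = eqToHom (by rw [Dobj_eq (Or.inl rfl), Dobj_eq (Or.inr rfl)]) := by
        unfold dD
        rw [dif_pos rfl]
      refine isFlat_of_isZero J (IsZero.of_iso (isZero_zero _) ?_)
      haveI : Mono (eqToHom (show Dobj (G := G) n F n = Dobj n F (n + 1) by
        rw [Dobj_eq (Or.inl rfl), Dobj_eq (Or.inr rfl)])) := by infer_instance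
      haveI : Mono ((DC n F).d n (n + 1)) := by rw [hd, he]; exact this
      exact kernel.ofMono _
    · have he : dD i F n = 0 := by
        unfold dD
        rw [dif_neg h]
      by_cases h2 : n = i + 1
      · exact isFlat_of_iso J
          (kernelIsoOfEq (hd.trans he) ≪≫ kernelZeroIsoSource ≪≫ eqToIso (Dobj_eq (Or.inr h2))) hF
      · refine isFlat_of_isZero J (IsZero.of_iso ?_
          (kernelIsoOfEq (hd.trans he) ≪≫ kernelZeroIsoSource))
        show IsZero (Dobj i F n)
        rw [Dobj_eq_zero (not_or.mpr ⟨h, h2⟩)]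
        exact isZero_zero _

end Construction


section Statement

variable {C : Type v} [SmallCategory C]
variable [HasLimits G] [HasColimits G] [AB5 G] [HasSeparator G]


/-- If `X` is a dg-cotorsion cochain complex in `A = Fun(C, G)`, then every component
`X.X i` is a cotorsion functor. -/
theorem statement12 (J : G) [Injective J] (hJ : IsCoseparator J)
    (hG : CompleteFlatCotorsionTheoryG J)
    (X : CochainComplex (C ⥤ G) ℤ) (hX : IsDgCotorsion J X) :
    ∀ i : ℤ, IsCotorsion J (X.X i) := by
  intro i E F ι p w hse hF
  obtain ⟨sp⟩ := hX (ιY X i ι) (pY X i ι p w) (wYP X i ι p w) (sesY X i ι p w hse)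
    (flatDC i J hF)
  have hr : ιY X i ι ≫ sp.r = 𝟙 X := sp.f_r
  have hri : ιf X i ι i ≫ sp.r.f i = 𝟙 (X.X i) := by
    have h4 := congr_arg (fun (φ : X ⟶ X) => φ.f i) hr
    exact h4
  have h2 : ι ≫ eqToHom (Yobj_i X i ι).symm ≫ sp.r.f i = 𝟙 (X.X i) := by
    have h3 := hri
    unfold ιf at h3
    rw [dif_pos rfl] at h3
    simp at h3
    exact (Category.assoc _ _ _).symm.trans h3
  exact ⟨ShortComplex.Splitting.ofExactOfRetraction _ hse.exact
    (eqToHom (Yobj_i X i ι).symm ≫ sp.r.f i) h2 hse.epi_g⟩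

end Statement

end FlatFunctorsPaper
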